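/- Let M be a real symmetric positive-definite 2n×2n matrix and J the standard symplectic matrix. Then every complex eigenvalue of the matrix JM is purely imaginary and nonzero; i.e. each eigenvalue is of the form ±iλ with λ > 0 real. -/

import Mathlib

open Matrix

noncomputable section

/-- The standard symplectic matrix `J = ((0, I), (-I, 0))`. -/
def stdJ (n : ℕ) : Matrix (Fin n ⊕ Fin n) (Fin n ⊕ Fin n) ℝ :=
  Matrix.fromBlocks 0 1 (-1) 0

lemma stdJ_mul_self (n : ℕ) : stdJ n * stdJ n = -1 := by
  ext i j
  simp only [stdJ, Matrix.fromBlocks_multiply]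
  rcases i with i | i <;> rcases j with j | j <;>
    simp [Matrix.one_apply, Matrix.fromBlocks]

lemma stdJ_transpose (n : ℕ) : (stdJ n)ᵀ = -(stdJ n) := by
  ext i j
  simp only [stdJ, Matrix.fromBlocks_transpose, Matrix.neg_apply]
  rcases i with i | i <;> rcases j with j | j <;> simp [Matrix.fromBlocks]

/-- Complexification of a real positive-definite matrix: the quadratic form
`v† M v` of a nonzero complex vector is a positive real number. -/
lemma posdef_complexify {ι : Type*} [Fintype ι] {M : Matrix ι ι ℝ} (hM : M.PosDef)
    (hMs : M.IsSymm) {v : ι → ℂ} (hv : v ≠ 0) :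
    ∃ r : ℝ, 0 < r ∧ star v ⬝ᵥ (M.map Complex.ofReal) *ᵥ v = (r : ℂ) := by
  classical
  set va : ι → ℝ := fun i => (v i).re with hva
  set vb : ι → ℝ := fun i => (v i).im with hvb
  set A : ι → ℂ := fun i => (va i : ℂ) with hA
  set B : ι → ℂ := fun i => (vb i : ℂ) with hB
  have hvAB : v = A + Complex.I • B := by
    funext i
    simp [hA, hB, hva, hvb, Complex.ext_iff]
  have hstar : star v = A - Complex.I • B := by
    funext i
    simp [hA, hB, hva, hvb, Complex.ext_iff]
  set Mc := M.map Complex.ofReal with hMc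
  have hQ : ∀ x y : ι → ℝ,
      (fun i => ((x i : ℂ))) ⬝ᵥ Mc *ᵥ (fun i => ((y i : ℂ))) = ((x ⬝ᵥ M *ᵥ y : ℝ) : ℂ) := by
    intro x y
    simp only [dotProduct, Matrix.mulVec, hMc, Matrix.map_apply]
    push_cast
    rfl
  have hsymmMc : Mcᵀ = Mc := by
    rw [hMc, ← Matrix.transpose_map, hMs]
  have hswap : A ⬝ᵥ Mc *ᵥ B = B ⬝ᵥ Mc *ᵥ A :=
    calc A ⬝ᵥ Mc *ᵥ B = (A ᵥ* Mc) ⬝ᵥ B := Matrix.dotProduct_mulVec _ _ _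
      _ = (Mcᵀ *ᵥ A) ⬝ᵥ B := by rw [Matrix.mulVec_transpose]
      _ = (Mc *ᵥ A) ⬝ᵥ B := by rw [hsymmMc]
      _ = B ⬝ᵥ Mc *ᵥ A := dotProduct_comm _ _
  refine ⟨va ⬝ᵥ M *ᵥ va + vb ⬝ᵥ M *ᵥ vb, ?_, ?_⟩
  · have hor : va ≠ 0 ∨ vb ≠ 0 := by
      by_contra h
      push_neg at h
      apply hv
      funext i
      have h1 : va i = 0 := by rw [h.1]; rfl
      have h2 : vb i = 0 := by rw [h.2]; rfl
      exact Complex.ext h1 h2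
    have hge : ∀ x : ι → ℝ, 0 ≤ x ⬝ᵥ M *ᵥ x := fun x => by
      simpa using hM.posSemidef.dotProduct_mulVec_nonneg x
    have hgt : ∀ x : ι → ℝ, x ≠ 0 → 0 < x ⬝ᵥ M *ᵥ x := fun x hx => by
      simpa using hM.dotProduct_mulVec_pos hx
    rcases hor with h | h
    · exact add_pos_of_pos_of_nonneg (hgt _ h) (hge _)
    · exact add_pos_of_nonneg_of_pos (hge _) (hgt _ h)
  · rw [hstar, hvAB]
    simp only [Matrix.mulVec_add, Matrix.mulVec_smul, sub_dotProduct,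
      dotProduct_add, dotProduct_smul, smul_dotProduct, smul_eq_mul,
      smul_smul]
    rw [hA, hB] at hswap ⊢
    rw [hswap, hQ va va, hQ vb vb]
    push_cast
    ring_nf
    rw [Complex.I_sq]
    ring

/-- For a real symmetric positive-definite `M`, every complex eigenvalue of `JM`
is purely imaginary and nonzero, i.e. of the form `± i λ` with `λ > 0`. -/
theorem eigenvalues_JM_purely_imaginary {n : ℕ} (hn : 1 ≤ n)
    (M : Matrix (Fin n ⊕ Fin n) (Fin n ⊕ Fin n) ℝ) (hMsymm : M.IsSymm) (hM : M.PosDef) :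
    ∀ μ ∈ spectrum ℂ ((stdJ n * M).map Complex.ofReal),
      μ.re = 0 ∧ μ ≠ 0 := by
  classical
  intro μ hμ
  set Jc : Matrix (Fin n ⊕ Fin n) (Fin n ⊕ Fin n) ℂ := (stdJ n).map Complex.ofReal with hJc
  set Mc : Matrix (Fin n ⊕ Fin n) (Fin n ⊕ Fin n) ℂ := M.map Complex.ofReal with hMcdef
  have hmap : (stdJ n * M).map Complex.ofReal = Jc * Mc :=
    Matrix.map_mul (f := Complex.ofRealHom)
  rw [hmap] at hμ
  -- get an eigenvector
  rw [← AlgEquiv.spectrum_eq (Matrix.toLinAlgEquiv' :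
      Matrix (Fin n ⊕ Fin n) (Fin n ⊕ Fin n) ℂ ≃ₐ[ℂ]
        ((Fin n ⊕ Fin n → ℂ) →ₗ[ℂ] (Fin n ⊕ Fin n → ℂ))) (Jc * Mc)] at hμ
  have hev : Module.End.HasEigenvalue (Matrix.toLin' (Jc * Mc)) μ :=
    Module.End.HasEigenvalue.of_mem_spectrum hμ
  obtain ⟨v, hve⟩ := hev.exists_hasEigenvector
  have hv0 : v ≠ 0 := hve.right
  have hAv : (Jc * Mc) *ᵥ v = μ • v := by
    have := hve.apply_eq_smul
    rwa [Matrix.toLin'_apply] at this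
  set w : Fin n ⊕ Fin n → ℂ := Mc *ᵥ v with hw
  have hJw : Jc *ᵥ w = μ • v := by
    rw [hw, Matrix.mulVec_mulVec]; exact hAv
  obtain ⟨r, hr, hc⟩ := posdef_complexify hM hMsymm hv0
  -- Jc is skew-Hermitian
  have hJH : Jcᴴ = -Jc := by
    ext i j
    have h := congrFun (congrFun (stdJ_transpose n) i) j
    simp only [Matrix.transpose_apply, Matrix.neg_apply] at h
    simp [hJc, Matrix.conjTranspose_apply, Matrix.map_apply, Complex.conj_ofReal, h]
  -- Mc is Hermitian
  have hMH : Mcᴴ = Mc := by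
    ext i j
    have h := congrFun (congrFun hMsymm i) j
    simp only [Matrix.transpose_apply] at h
    simp [hMcdef, Matrix.conjTranspose_apply, Matrix.map_apply, Complex.conj_ofReal, h]
  -- star w ⬝ᵥ v = r
  have hwv : star w ⬝ᵥ v = (r : ℂ) := by
    rw [hw, Matrix.star_mulVec, ← Matrix.dotProduct_mulVec, hMH]
    exact hc
  -- d := star w ⬝ᵥ Jc *ᵥ w
  set d : ℂ := star w ⬝ᵥ Jc *ᵥ w with hd
  have hdval : d = μ * r := by
    rw [hd, hJw, dotProduct_smul, smul_eq_mul, hwv]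
  have hdskew : star d = -d := by
    rw [hd, ← Matrix.star_dotProduct_star, star_star, Matrix.star_mulVec,
      ← Matrix.dotProduct_mulVec, hJH, Matrix.neg_mulVec, dotProduct_neg]
  have hre : d.re = 0 := by
    have h2 := congrArg Complex.re hdskew
    simp only [Complex.star_def, Complex.conj_re, Complex.neg_re] at h2
    linarith
  constructor
  · have : μ.re * r = 0 := by
      have := congrArg Complex.re hdval
      simpa [hre] using this.symm
    exact (mul_eq_zero.mp this).resolve_right (ne_of_gt hr)
  · rintro rfl
    rw [zero_smul] at hJw
    have hw0 : w = 0 := by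
      have h2 : (Jc * Jc) *ᵥ w = 0 := by
        rw [← Matrix.mulVec_mulVec, hJw, Matrix.mulVec_zero]
      have hJJ : Jc * Jc = -1 := by
        have h : (stdJ n * stdJ n).map Complex.ofReal = Jc * Jc :=
          Matrix.map_mul (f := Complex.ofRealHom)
        rw [stdJ_mul_self] at h
        rw [← h]
        ext i j
        simp [Matrix.map_apply, Matrix.one_apply, apply_ite Complex.ofReal]
      rw [hJJ] at h2
      simpa [Matrix.neg_mulVec] using h2
    rw [hw] at hw0
    rw [hw0] at hc
    simp at hc
    exact (ne_of_gt hr) (by exact_mod_cast hc.symm)
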